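/- If the partition λ of n is lexicographically greater than the partition μ of n, or if μ has more parts than λ, then there is no semistandard Young tableau of shape μ and content (type) λ; that is, the Kostka number K_{μλ} equals 0. -/

import Mathlib

/-- `l` is a partition of `n`: a weakly decreasing list of positive integers summing to `n`. -/
def IsPartitionOf (n : ℕ) (l : List ℕ) : Prop :=
  l.Pairwise (· ≥ ·) ∧ (∀ x ∈ l, 0 < x) ∧ l.sum = n

/-- The content of a semistandard Young tableau: the number of cells with entry `k`. -/
def ssytContent {μ : YoungDiagram} (T : SemistandardYoungTableau μ) (k : ℕ) : ℕ :=
  (μ.cells.filter (fun c => T c.1 c.2 = k)).card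

/-- entries grow down columns: row index bounds entry from below -/
lemma row_le_entry {μ : YoungDiagram} (T : SemistandardYoungTableau μ) :
    ∀ i j, (i, j) ∈ μ → i ≤ T i j := by
  intro i
  induction i with
  | zero => intro j _; exact Nat.zero_le _
  | succ m ih =>
    intro j h
    have h' : (m, j) ∈ μ := μ.up_left_mem (Nat.le_succ m) le_rfl h
    exact Nat.lt_of_le_of_lt (ih j h') (T.col_strict (Nat.lt_succ_self m) h)

lemma sum_content (μ : YoungDiagram) (T : SemistandardYoungTableau μ) (m : ℕ) :
    ∑ k ∈ Finset.range m, ssytContent T k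
      = (μ.cells.filter (fun c => T c.1 c.2 < m)).card := by
  rw [Finset.card_eq_sum_card_fiberwise
    (f := fun c => T c.1 c.2) (t := Finset.range m)
    (fun c hc => by simpa using (Finset.mem_filter.mp hc).2)]
  refine Finset.sum_congr rfl fun k hk => ?_
  rw [Finset.mem_range] at hk
  unfold ssytContent
  rw [Finset.filter_filter]
  congr 1
  ext c
  simp only [Finset.mem_filter, and_assoc]
  constructor
  · rintro ⟨h1, h3⟩; exact ⟨h1, by omega, h3⟩
  · rintro ⟨h1, h2, h3⟩; exact ⟨h1, h3⟩

lemma card_rows_lt (μ : YoungDiagram) (m : ℕ) :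
    (μ.cells.filter (fun c => c.1 < m)).card = ∑ i ∈ Finset.range m, μ.rowLen i := by
  rw [Finset.card_eq_sum_card_fiberwise
    (f := fun c => c.1) (t := Finset.range m)
    (fun c hc => by simpa using (Finset.mem_filter.mp hc).2)]
  refine Finset.sum_congr rfl fun i hi => ?_
  rw [Finset.mem_range] at hi
  rw [μ.rowLen_eq_card]
  congr 1
  rw [Finset.filter_filter]
  ext c
  simp only [Finset.mem_filter, YoungDiagram.mem_row_iff, YoungDiagram.mem_cells]
  constructor
  · rintro ⟨h1, _, h3⟩; exact ⟨h1, h3⟩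
  · rintro ⟨h1, h2⟩; exact ⟨h1, h2 ▸ hi, h2⟩

lemma content_sum_le (μ : YoungDiagram) (T : SemistandardYoungTableau μ) (m : ℕ) :
    ∑ k ∈ Finset.range m, ssytContent T k ≤ ∑ i ∈ Finset.range m, μ.rowLen i := by
  rw [sum_content, ← card_rows_lt]
  apply Finset.card_le_card
  intro c hc
  rw [Finset.mem_filter] at hc ⊢
  refine ⟨hc.1, lt_of_le_of_lt ?_ hc.2⟩
  exact row_le_entry T c.1 c.2 (by simpa using hc.1)

lemma rowLen_ofRowLens_getD (mu : List ℕ) (hmusort : mu.Pairwise (· ≥ ·)) (i : ℕ) :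
    (YoungDiagram.ofRowLens mu hmusort.sortedGE).rowLen i = mu.getD i 0 := by
  by_cases h : i < mu.length
  · rw [YoungDiagram.rowLen_ofRowLens ⟨i, h⟩, List.getD_eq_getElem _ _ h]
    rfl
  · push_neg at h
    rw [List.getD_eq_default _ _ h]
    by_contra hne
    have hpos : 0 < (YoungDiagram.ofRowLens mu hmusort.sortedGE).rowLen i := Nat.pos_of_ne_zero hne
    have : (i, 0) ∈ YoungDiagram.ofRowLens mu hmusort.sortedGE :=
      YoungDiagram.mem_iff_lt_rowLen.mpr hpos
    rw [YoungDiagram.mem_ofRowLens] at this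
    obtain ⟨hlt, -⟩ := this
    omega

lemma sum_range_getD (l : List ℕ) (m : ℕ) :
    ∑ k ∈ Finset.range m, l.getD k 0 = (l.take m).sum := by
  induction m with
  | zero => simp
  | succ m ih =>
    rw [Finset.sum_range_succ, ih, List.take_succ, List.sum_append]
    congr 1
    cases h : l[m]? with
    | none => simp [List.getD, h]
    | some a => simp [List.getD, h]

lemma lex_extract : ∀ {mu lam : List ℕ}, List.Lex (· < ·) mu lam →
    ∃ i, (∀ k < i, mu.getD k 0 = lam.getD k 0) ∧
      ((mu.length = i ∧ i < lam.length) ∨ mu.getD i 0 < lam.getD i 0) := by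
  intro mu lam h
  induction h with
  | nil => exact ⟨0, fun k hk => absurd hk (Nat.not_lt_zero k), Or.inl ⟨rfl, by simp⟩⟩
  | @rel a l b l' hab => exact ⟨0, fun k hk => absurd hk (Nat.not_lt_zero k), Or.inr (by simpa using hab)⟩
  | @cons a l l' _ ih =>
    obtain ⟨i, h1, h2⟩ := ih
    refine ⟨i + 1, ?_, ?_⟩
    · intro k hk
      cases k with
      | zero => simp
      | succ k => simpa using h1 k (by omega)
    · rcases h2 with ⟨hl, hi⟩ | hlt
      · exact Or.inl ⟨by simp [hl], by simpa using hi⟩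
      · exact Or.inr (by simpa using hlt)

/-- If the partition `λ` of `n` is lexicographically greater than the partition `μ` of `n`,
or `μ` has more parts than `λ`, then there is no semistandard Young tableau of shape `μ`
and content `λ` (with `λ.get k` copies of the entry `k`); i.e. the Kostka number
`K_{μλ}` is zero. -/
theorem kostka_eq_zero (n : ℕ) (lam mu : List ℕ)
    (hlam : IsPartitionOf n lam) (hmu : IsPartitionOf n mu)
    (hmusort : mu.Pairwise (· ≥ ·))
    (h : List.Lex (· < ·) mu lam ∨ mu.length > lam.length) :
    ¬ ∃ T : SemistandardYoungTableau (YoungDiagram.ofRowLens mu hmusort.sortedGE),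
        ∀ k : ℕ, ssytContent T k = lam.getD k 0 := by
  rintro ⟨T, hT⟩
  rcases h with hlex | hlen
  · -- lex case
    obtain ⟨i, heq, hcase⟩ := lex_extract hlex
    rcases hcase with ⟨hmulen, hi⟩ | hlt
    · -- mu is a strict prefix of lam : sums can't both be n
      have h1 : ∑ k ∈ Finset.range i, lam.getD k 0 = n := by
        have he : ∑ k ∈ Finset.range i, lam.getD k 0 = ∑ k ∈ Finset.range i, mu.getD k 0 :=
          Finset.sum_congr rfl fun k hk => (heq k (Finset.mem_range.mp hk)).symm
        rw [he, sum_range_getD, ← hmulen, List.take_length, hmu.2.2]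
      have h2 : (lam.take i).sum = n := by rw [← sum_range_getD]; exact h1
      have h3 : lam.sum = (lam.take i).sum + (lam.drop i).sum := by
        rw [← List.sum_append, List.take_append_drop]
      have h4 : 0 < (lam.drop i).sum := by
        have hne : lam.drop i ≠ [] := by
          intro hcon
          have : (lam.drop i).length = lam.length - i := List.length_drop
          rw [hcon] at this
          simp at this
          omega
        obtain ⟨a, ha⟩ := List.exists_mem_of_ne_nil _ hne
        have hpos : 0 < a := hlam.2.1 a (List.mem_of_mem_drop ha)
        calc 0 < a := hpos
          _ ≤ (lam.drop i).sum := List.single_le_sum (fun x _ => Nat.zero_le x) a ha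
      rw [hlam.2.2, h2] at h3
      omega
    · -- first difference at i: counting contradiction with m = i+1
      have hb := content_sum_le (YoungDiagram.ofRowLens mu hmusort.sortedGE) T (i + 1)
      have hL : ∑ k ∈ Finset.range (i+1), ssytContent T k
          = ∑ k ∈ Finset.range (i+1), lam.getD k 0 :=
        Finset.sum_congr rfl fun k _ => hT k
      have hR : ∑ j ∈ Finset.range (i+1), (YoungDiagram.ofRowLens mu hmusort.sortedGE).rowLen j
          = ∑ j ∈ Finset.range (i+1), mu.getD j 0 :=
        Finset.sum_congr rfl fun j _ => rowLen_ofRowLens_getD mu hmusort j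
      rw [hL, hR] at hb
      rw [Finset.sum_range_succ, Finset.sum_range_succ] at hb
      have hpref : ∑ k ∈ Finset.range i, lam.getD k 0 = ∑ k ∈ Finset.range i, mu.getD k 0 :=
        (Finset.sum_congr rfl fun k hk => (heq k (Finset.mem_range.mp hk)).symm)
      omega
  · -- length case: cell (lam.length, 0) exists
    set m := lam.length
    have hmem : (m, 0) ∈ (YoungDiagram.ofRowLens mu hmusort.sortedGE) := by
      rw [YoungDiagram.mem_ofRowLens]
      refine ⟨hlen, ?_⟩
      exact hmu.2.1 _ (List.getElem_mem hlen)
    have hk : T m 0 = T m 0 := rfl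
    have hmk : m ≤ T m 0 := row_le_entry T m 0 hmem
    have hzero : ssytContent T (T m 0) = 0 := by
      rw [hT (T m 0), List.getD_eq_default]
      exact hmk
    have hone : 0 < ssytContent T (T m 0) := by
      rw [ssytContent, Finset.card_pos]
      exact ⟨(m, 0), Finset.mem_filter.mpr ⟨by simpa using hmem, rfl⟩⟩
    omega
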